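/- Let F : [0,∞) → [0,∞) be a nonincreasing function and α ∈ (0,1]. Then ( (1/α) ∫₀^∞ F(t) t^{1/α − 1} dt )^α ≤ ∫₀^∞ F(t)^α dt, where both integrals are Lebesgue integrals with values in [0,∞]. -/

import Mathlib

set_option maxHeartbeats 1000000
open MeasureTheory Set
open scoped ENNReal NNReal

lemma rpow_tangent {β a b : ℝ} (hβ : 1 < β) (ha : 0 ≤ a) (hab : a ≤ b) :
    a ^ β + β * a ^ (β - 1) * (b - a) ≤ b ^ β := by
  rcases ha.eq_or_lt with rfl | ha
  · rw [Real.zero_rpow (by linarith), Real.zero_rpow (by linarith)]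
    simpa using Real.rpow_nonneg hab β
  · have hber := one_add_mul_self_le_rpow_one_add (by
      have : (0:ℝ) ≤ (b - a) / a := div_nonneg (by linarith) ha.le
      linarith : (-1:ℝ) ≤ (b-a)/a) hβ.le
    have h1 : (1 + (b-a)/a) = b / a := by field_simp; ring
    rw [h1, Real.div_rpow (by linarith) ha.le] at hber
    have this1 := mul_le_mul_of_nonneg_left hber (Real.rpow_nonneg ha.le β)
    have haβ : (0:ℝ) < a ^ β := Real.rpow_pos_of_pos ha β
    have h2 : a ^ (β - 1) = a ^ β / a := Real.rpow_sub_one ha.ne' β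
    have e1 : a ^ β * (1 + β * ((b - a) / a)) = a ^ β + β * (a ^ β / a) * (b - a) := by
      field_simp
    have e2 : a ^ β * (b ^ β / a ^ β) = b ^ β := by field_simp
    rw [e1, e2] at this1
    rw [h2]; exact this1

lemma aux_core (x : ℝ → ℝ≥0∞) (hx : Measurable x) (β : ℝ) (hβ : 1 < β)
    (C : ℝ≥0∞) (hC : C ≠ ⊤) (hxC : ∀ t ∈ Set.Ioi (0:ℝ), x t ≤ C)
    (hR : ∫⁻ t in Set.Ioi (0:ℝ), x t ≠ ⊤) :
    ENNReal.ofReal β *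
      ∫⁻ t in Set.Ioi (0:ℝ), ((∫⁻ s in Set.Ioc (0:ℝ) t, x s) ^ (β-1) * x t) ≤
      (∫⁻ t in Set.Ioi (0:ℝ), x t) ^ β := by
  have hβ1 : (0:ℝ) ≤ β - 1 := by linarith
  have hβ0 : (0:ℝ) < β := by linarith
  set ν : Measure ℝ := (volume.restrict (Set.Ioi 0)).withDensity x with hνdef
  have hν : ∀ s : Set ℝ, MeasurableSet s → s ⊆ Set.Ioi 0 → ν s = ∫⁻ t in s, x t := by
    intro s hs hsub
    rw [hνdef, withDensity_apply x hs, Measure.restrict_restrict hs,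
      Set.inter_eq_self_of_subset_left hsub]
  set R : ℝ≥0∞ := ∫⁻ t in Set.Ioi (0:ℝ), x t with hRdef
  have hνIoi : ν (Set.Ioi 0) = R := by rw [hRdef]; exact hν _ measurableSet_Ioi subset_rfl
  set Φ : ℝ → ℝ≥0∞ := fun t => ν (Set.Ioc 0 t) with hΦdef
  have hΦeq : ∀ t : ℝ, Φ t = ∫⁻ s in Set.Ioc (0:ℝ) t, x s := fun t =>
    hν _ measurableSet_Ioc Set.Ioc_subset_Ioi_self
  have hΦmono : Monotone Φ := fun a b hab =>
    measure_mono (Set.Ioc_subset_Ioc_right hab)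
  have hΦle : ∀ t, Φ t ≤ R := fun t => by
    rw [← hνIoi]; exact measure_mono Set.Ioc_subset_Ioi_self
  have hΦfin : ∀ t, Φ t ≠ ⊤ := fun t => ((hΦle t).trans_lt hR.lt_top).ne
  have hRν : ν (Set.Ioi 0) ≠ ⊤ := by rw [hνIoi]; exact hR
  -- the measure ω with density Φ^(β-1) * x
  have hΦmeas : Measurable Φ := hΦmono.measurable
  have hd : Measurable fun t => Φ t ^ (β - 1) * x t :=
    (hΦmeas.pow measurable_const).mul hx
  set ω : Measure ℝ := (volume.restrict (Set.Ioi 0)).withDensity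
      (fun t => Φ t ^ (β - 1) * x t) with hωdef
  have hω : ∀ s : Set ℝ, MeasurableSet s → s ⊆ Set.Ioi 0 →
      ω s = ∫⁻ t in s, Φ t ^ (β - 1) * x t := by
    intro s hs hsub
    rw [hωdef, withDensity_apply _ hs, Measure.restrict_restrict hs,
      Set.inter_eq_self_of_subset_left hsub]
  have hωIoi : ω (Set.Ioi 0) = ∫⁻ t in Set.Ioi (0:ℝ), Φ t ^ (β - 1) * x t :=
    hω _ measurableSet_Ioi subset_rfl
  -- bound for ω on pieces
  have homega_le : ∀ a b : ℝ, 0 ≤ a → (B : ℝ≥0∞) → (∀ s ∈ Set.Ioc a b, Φ s ^ (β-1) ≤ B) →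
      ω (Set.Ioc a b) ≤ B * ν (Set.Ioc a b) := by
    intro a b ha B hB
    have hsub : Set.Ioc a b ⊆ Set.Ioi 0 := fun s hs => lt_of_le_of_lt ha hs.1
    rw [hω _ measurableSet_Ioc hsub, hν _ measurableSet_Ioc hsub]
    calc ∫⁻ t in Set.Ioc a b, Φ t ^ (β - 1) * x t
        ≤ ∫⁻ t in Set.Ioc a b, B * x t :=
          setLIntegral_mono (measurable_const.mul hx)
            (fun t ht => mul_le_mul_left (hB t ht) _)
      _ = B * ∫⁻ t in Set.Ioc a b, x t := lintegral_const_mul B hx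
  have htail : ∀ c : ℝ, 0 ≤ c → ω (Set.Ioi c) ≤ R ^ (β-1) * ν (Set.Ioi c) := by
    intro c hc
    have hsub : Set.Ioi c ⊆ Set.Ioi 0 := Set.Ioi_subset_Ioi hc
    rw [hω _ measurableSet_Ioi hsub, hν _ measurableSet_Ioi hsub]
    calc ∫⁻ t in Set.Ioi c, Φ t ^ (β - 1) * x t
        ≤ ∫⁻ t in Set.Ioi c, R ^ (β-1) * x t :=
          setLIntegral_mono (measurable_const.mul hx)
            (fun t _ => mul_le_mul_left (ENNReal.rpow_le_rpow (hΦle t) hβ1) _)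
      _ = R ^ (β-1) * ∫⁻ t in Set.Ioi c, x t := lintegral_const_mul _ hx
  -- the real-valued cumulative function
  set r : ℝ := R.toReal with hrdef
  set φ : ℝ → ℝ := fun t => (Φ t).toReal with hφdef
  have hφmono : Monotone φ := fun a b hab => ENNReal.toReal_mono (hΦfin b) (hΦmono hab)
  have hφ0 : φ 0 = 0 := by simp [hφdef, hΦdef]
  have hφnn : ∀ t, 0 ≤ φ t := fun t => ENNReal.toReal_nonneg
  have hΦofReal : ∀ t, Φ t = ENNReal.ofReal (φ t) := fun t =>
    (ENNReal.ofReal_toReal (hΦfin t)).symm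
  have hadd : ∀ a b : ℝ, 0 ≤ a → a ≤ b → Φ b = Φ a + ν (Set.Ioc a b) := by
    intro a b ha hab
    rw [hΦdef]
    simp only
    rw [← Set.Ioc_union_Ioc_eq_Ioc ha hab,
      measure_union (Set.Ioc_disjoint_Ioc_of_le le_rfl) measurableSet_Ioc]
  have hνIocfin : ∀ a b : ℝ, ν (Set.Ioc a b) ≠ ⊤ := by
    intro a b
    refine ne_top_of_le_ne_top ?_ (measure_mono (Set.subset_univ _))
    rw [hνdef, withDensity_apply x MeasurableSet.univ, Measure.restrict_univ]
    exact hR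
  have hνIoc : ∀ a b : ℝ, 0 ≤ a → a ≤ b → ν (Set.Ioc a b) = ENNReal.ofReal (φ b - φ a) := by
    intro a b ha hab
    have h1 := hadd a b ha hab
    have h2 : φ b = φ a + (ν (Set.Ioc a b)).toReal := by
      rw [hφdef]; simp only
      rw [h1, ENNReal.toReal_add (hΦfin a) (hνIocfin a b)]
    rw [show φ b - φ a = (ν (Set.Ioc a b)).toReal by linarith,
      ENNReal.ofReal_toReal (hνIocfin a b)]
  have hsplitR : ∀ c : ℝ, 0 ≤ c → R = Φ c + ν (Set.Ioi c) := by
    intro c hc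
    rw [← hνIoi, ← Set.Ioc_union_Ioi_eq_Ioi hc,
      measure_union Set.Ioc_disjoint_Ioi_same measurableSet_Ioi]
  have hνIoi_eq : ∀ c : ℝ, 0 ≤ c → ν (Set.Ioi c) = ENNReal.ofReal (r - φ c) := by
    intro c hc
    have h1 := hsplitR c hc
    have hfin : ν (Set.Ioi c) ≠ ⊤ := by
      intro h; rw [h, add_top] at h1; exact hR h1
    have h2 : r = φ c + (ν (Set.Ioi c)).toReal := by
      rw [hrdef, h1, ENNReal.toReal_add (hΦfin c) hfin]
    rw [show r - φ c = (ν (Set.Ioi c)).toReal by linarith, ENNReal.ofReal_toReal hfin]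
  -- Lipschitz continuity of φ on [0,∞)
  have hνC : ∀ a b : ℝ, 0 ≤ a → ν (Set.Ioc a b) ≤ C * ENNReal.ofReal (b - a) := by
    intro a b ha
    rcases le_or_gt b a with hba | hab
    · rw [Set.Ioc_eq_empty (fun h => absurd hba (not_le.mpr h))]
      simp
    · have hsub : Set.Ioc a b ⊆ Set.Ioi 0 := fun s hs => lt_of_le_of_lt ha hs.1
      rw [hν _ measurableSet_Ioc hsub]
      calc ∫⁻ t in Set.Ioc a b, x t ≤ ∫⁻ _ in Set.Ioc a b, C :=
            setLIntegral_mono measurable_const (fun t ht => hxC t (hsub ht))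
        _ = C * volume (Set.Ioc a b) := setLIntegral_const _ _
        _ = C * ENNReal.ofReal (b - a) := by rw [Real.volume_Ioc]
  have hφdiff : ∀ a b : ℝ, 0 ≤ a → a ≤ b → φ b - φ a ≤ C.toReal * (b - a) := by
    intro a b ha hab
    have h1 : (ν (Set.Ioc a b)).toReal ≤ C.toReal * (b - a) := by
      have h2 : (C * ENNReal.ofReal (b - a)).toReal = C.toReal * (b - a) := by
        rw [ENNReal.toReal_mul, ENNReal.toReal_ofReal (by linarith)]
      rw [← h2]
      exact ENNReal.toReal_mono (ENNReal.mul_ne_top hC ENNReal.ofReal_ne_top) (hνC a b ha)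
    have h3 : φ b - φ a = (ν (Set.Ioc a b)).toReal := by
      rw [hνIoc a b ha hab, ENNReal.toReal_ofReal (by linarith [hφmono hab])]
    linarith
  have hφcont : ContinuousOn φ (Set.Ici 0) := by
    refine LipschitzOnWith.continuousOn (K := C.toNNReal) ?_
    rw [lipschitzOnWith_iff_dist_le_mul]
    intro b hb a ha
    have hco : (C.toNNReal : ℝ) = C.toReal := rfl
    rcases le_total a b with hab | hab
    · rw [Real.dist_eq, Real.dist_eq, abs_of_nonneg (by linarith [hφmono hab]),
        abs_of_nonneg (by linarith), hco]
      exact hφdiff a b ha hab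
    · rw [Real.dist_eq, Real.dist_eq, abs_of_nonpos (by linarith [hφmono hab]),
        abs_of_nonpos (by linarith), hco]
      have := hφdiff b a hb hab
      linarith
  -- attainment of intermediate values
  have hsup : ∀ c : ℝ, 0 ≤ c → c < r → ∃ t, 0 ≤ t ∧ φ t = c := by
    intro c hc hcr
    have hUnion : (⋃ n : ℕ, Set.Ioc (0:ℝ) n) = Set.Ioi 0 := by
      ext u
      simp only [Set.mem_iUnion, Set.mem_Ioc, Set.mem_Ioi]
      constructor
      · rintro ⟨n, hn, -⟩; exact hn
      · intro hu; obtain ⟨n, hn⟩ := exists_nat_ge u; exact ⟨n, hu, hn⟩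
    have hmono2 : Monotone (fun n : ℕ => Set.Ioc (0:ℝ) n) := fun n m hnm =>
      Set.Ioc_subset_Ioc_right (Nat.cast_le.mpr hnm)
    have hiSup : (⨆ n : ℕ, Φ (n : ℝ)) = R := by
      rw [← hνIoi, ← hUnion, Directed.measure_iUnion hmono2.directed_le]
    have h1 : ENNReal.ofReal c < R := by
      rw [← ENNReal.ofReal_toReal hR]
      exact (ENNReal.ofReal_lt_ofReal_iff (lt_of_le_of_lt hc hcr)).mpr hcr
    rw [← hiSup] at h1
    obtain ⟨n, hn⟩ := lt_iSup_iff.mp h1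
    have hφn : c < φ (n:ℝ) := by
      have h2 := (ENNReal.toReal_lt_toReal ENNReal.ofReal_ne_top (hΦfin (n:ℝ))).mpr hn
      rwa [ENNReal.toReal_ofReal hc] at h2
    have hIcc : Set.Icc (0:ℝ) (n:ℝ) ⊆ Set.Ici 0 := fun u hu => hu.1
    have hmem : c ∈ Set.Icc (φ 0) (φ (n:ℝ)) := by rw [hφ0]; exact ⟨hc, hφn.le⟩
    obtain ⟨t, ht, hφt⟩ := intermediate_value_Icc (Nat.cast_nonneg n) (hφcont.mono hIcc) hmem
    exact ⟨t, ht.1, hφt⟩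
  -- rewrite the goal in terms of ω
  have hgoal_eq : ∫⁻ t in Set.Ioi (0:ℝ), ((∫⁻ s in Set.Ioc (0:ℝ) t, x s) ^ (β-1) * x t)
      = ω (Set.Ioi 0) := by
    rw [hωIoi]
    refine setLIntegral_congr_fun measurableSet_Ioi (fun t ht => ?_)
    rw [hΦeq]
  rw [hgoal_eq]
  rcases eq_or_lt_of_le (ENNReal.toReal_nonneg : (0:ℝ) ≤ r) with hr0 | hr0
  · -- R = 0
    have hR0 : R = 0 := by
      rw [← ENNReal.ofReal_toReal hR, ← hrdef, show r = 0 from hrdef.trans hr0.symm,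
        ENNReal.ofReal_zero]
    have h1 := htail 0 le_rfl
    rw [hνIoi, hR0, mul_zero, le_zero_iff] at h1
    rw [h1, mul_zero]
    exact (by simp)
  · -- main case 0 < r
    refine ENNReal.le_of_forall_pos_le_add (fun ε hε _ => ?_)
    obtain ⟨m, hm⟩ := exists_nat_gt (2 * β * r ^ β / (ε : ℝ))
    have hεpos : (0:ℝ) < (ε:ℝ) := hε
    have hqnn : (0:ℝ) ≤ 2 * β * r ^ β := by positivity
    set n : ℕ := m + 1 with hndef
    have hn0 : (0:ℝ) < (n:ℝ) := by positivity
    set Δ : ℝ := r / n with hΔdef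
    have hΔpos : 0 < Δ := by positivity
    have hnΔ : (n:ℝ) * Δ = r := by rw [hΔdef]; field_simp
    have claim : ∀ k : ℕ, k < n → ∀ t : ℝ, 0 ≤ t → φ t = k * Δ →
        ω (Set.Ioc 0 t) ≤
          ENNReal.ofReal ((k*Δ) ^ β / β + Δ * (k*Δ) ^ (β - 1)) := by
      intro k
      induction k with
      | zero =>
        intro _ t ht hφt
        have hΦt : Φ t = 0 := by
          rw [hΦofReal t, hφt]; norm_num
        have h1 := homega_le 0 t le_rfl (Φ t ^ (β-1))
          (fun s hs => ENNReal.rpow_le_rpow (hΦmono hs.2) hβ1)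
        rw [show ν (Set.Ioc 0 t) = Φ t from rfl, hΦt, mul_zero] at h1
        exact le_trans h1 (by simp)
      | succ k ih =>
        intro hk1 t ht hφt
        have hk : k < n := Nat.lt_of_succ_lt hk1
        have hkr : (k:ℝ) < n := by exact_mod_cast hk
        have hck_lt : (k:ℝ) * Δ < r := by
          rw [← hnΔ]
          exact mul_lt_mul_of_pos_right hkr hΔpos
        have hck0 : (0:ℝ) ≤ (k:ℝ) * Δ := by positivity
        obtain ⟨t', ht'0, hφt'⟩ := hsup ((k:ℝ)*Δ) hck0 hck_lt
        have hcast : ((k+1 : ℕ):ℝ) = (k:ℝ) + 1 := by push_cast; ring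
        rw [hcast]
        have ht't : t' ≤ t := by
          by_contra h
          push_neg at h
          have h2 := hφmono h.le
          rw [hφt, hφt', hcast] at h2
          nlinarith
        have hsplit : ω (Set.Ioc 0 t) = ω (Set.Ioc 0 t') + ω (Set.Ioc t' t) := by
          rw [← Set.Ioc_union_Ioc_eq_Ioc ht'0 ht't,
            measure_union (Set.Ioc_disjoint_Ioc_of_le le_rfl) measurableSet_Ioc]
        have hΦt : Φ t = ENNReal.ofReal (((k:ℝ)+1)*Δ) := by
          rw [hΦofReal t, hφt, hcast]
        have hνpiece : ν (Set.Ioc t' t) = ENNReal.ofReal Δ := by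
          rw [hνIoc t' t ht'0 ht't, hφt, hφt', hcast]
          ring_nf
        have hpiece : ω (Set.Ioc t' t) ≤ ENNReal.ofReal ((((k:ℝ)+1)*Δ) ^ (β-1) * Δ) := by
          have h2 := homega_le t' t ht'0 (Φ t ^ (β-1))
            (fun s hs => ENNReal.rpow_le_rpow (hΦmono hs.2) hβ1)
          rw [hνpiece, hΦt, ENNReal.ofReal_rpow_of_nonneg (by positivity) hβ1,
            ← ENNReal.ofReal_mul (by positivity)] at h2
          exact h2
        have hreal : ((k:ℝ)*Δ) ^ β / β + Δ * ((k:ℝ)*Δ) ^ (β - 1)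
            + (((k:ℝ)+1)*Δ) ^ (β-1) * Δ
            ≤ ((((k:ℝ)+1))*Δ) ^ β / β + Δ * ((((k:ℝ)+1))*Δ) ^ (β - 1) := by
          have htan := rpow_tangent hβ hck0
            (by nlinarith : (k:ℝ)*Δ ≤ ((k:ℝ)+1)*Δ)
          rw [show ((k:ℝ)+1)*Δ - (k:ℝ)*Δ = Δ by ring] at htan
          have h4 := (div_le_div_iff_of_pos_right hβ0).mpr htan
          have h5 : (((k:ℝ)*Δ) ^ β + β * ((k:ℝ)*Δ) ^ (β - 1) * Δ) / β
              = ((k:ℝ)*Δ) ^ β / β + ((k:ℝ)*Δ) ^ (β-1) * Δ := by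
            field_simp
          rw [h5] at h4
          linarith
        calc ω (Set.Ioc 0 t)
            ≤ ENNReal.ofReal (((k:ℝ)*Δ) ^ β / β + Δ * ((k:ℝ)*Δ) ^ (β - 1))
              + ENNReal.ofReal ((((k:ℝ)+1)*Δ) ^ (β-1) * Δ) := by
              rw [hsplit]
              exact add_le_add (ih hk t' ht'0 hφt') hpiece
          _ = ENNReal.ofReal (((k:ℝ)*Δ) ^ β / β + Δ * ((k:ℝ)*Δ) ^ (β - 1)
              + (((k:ℝ)+1)*Δ) ^ (β-1) * Δ) := by
              rw [← ENNReal.ofReal_add (by positivity) (by positivity)]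
          _ ≤ ENNReal.ofReal (((((k:ℝ)+1))*Δ) ^ β / β + Δ * ((((k:ℝ)+1))*Δ) ^ (β - 1)) :=
              ENNReal.ofReal_le_ofReal hreal
    -- final assembly
    have hmr : (m:ℝ) * Δ < r := by
      rw [← hnΔ]
      refine mul_lt_mul_of_pos_right ?_ hΔpos
      exact_mod_cast Nat.lt_succ_self m
    obtain ⟨t₀, ht₀0, hφt₀⟩ := hsup ((m:ℝ)*Δ) (by positivity) hmr
    have h1 := claim m (Nat.lt_succ_self m) t₀ ht₀0 hφt₀
    have h2 := htail t₀ ht₀0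
    have hsplit : ω (Set.Ioi 0) = ω (Set.Ioc 0 t₀) + ω (Set.Ioi t₀) := by
      rw [← Set.Ioc_union_Ioi_eq_Ioi ht₀0,
        measure_union Set.Ioc_disjoint_Ioi_same measurableSet_Ioi]
    have hν2 : ν (Set.Ioi t₀) = ENNReal.ofReal Δ := by
      rw [hνIoi_eq t₀ ht₀0, hφt₀]
      congr 1
      have : (m:ℝ) = (n:ℝ) - 1 := by rw [hndef]; push_cast; ring
      rw [this, hΔdef]
      field_simp
      ring
    have hRr : R = ENNReal.ofReal r := (ENNReal.ofReal_toReal hR).symm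
    have hRpow : R ^ (β-1) = ENNReal.ofReal (r ^ (β-1)) := by
      rw [hRr, ENNReal.ofReal_rpow_of_pos hr0]
    have h2' : ω (Set.Ioi t₀) ≤ ENNReal.ofReal (r ^ (β-1) * Δ) := by
      rw [hRpow, hν2, ← ENNReal.ofReal_mul (by positivity)] at h2
      exact h2
    have hmΔr : (m:ℝ) * Δ ≤ r := hmr.le
    have hmΔ0 : (0:ℝ) ≤ (m:ℝ) * Δ := by positivity
    have hrealfin : β * (((m:ℝ)*Δ) ^ β / β + Δ * ((m:ℝ)*Δ) ^ (β - 1) + r ^ (β-1) * Δ)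
        ≤ r ^ β + 2 * β * r ^ β / n := by
      have e1 : ((m:ℝ)*Δ) ^ β ≤ r ^ β := Real.rpow_le_rpow hmΔ0 hmΔr hβ0.le
      have e2 : ((m:ℝ)*Δ) ^ (β-1) ≤ r ^ (β-1) := Real.rpow_le_rpow hmΔ0 hmΔr hβ1
      have hβne : β ≠ 0 := ne_of_gt hβ0
      have hrne : r ≠ 0 := ne_of_gt hr0
      have hnne : (n:ℝ) ≠ 0 := ne_of_gt hn0
      have e3 : r ^ (β-1) * Δ = r ^ β / n := by
        rw [Real.rpow_sub_one hrne, hΔdef]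
        field_simp

      have e5 : Δ * ((m:ℝ)*Δ) ^ (β - 1) ≤ r ^ β / n := by
        calc Δ * ((m:ℝ)*Δ) ^ (β - 1) ≤ Δ * r ^ (β-1) := by
              exact mul_le_mul_of_nonneg_left e2 hΔpos.le
          _ = r ^ β / n := by rw [mul_comm]; exact e3
      have hβn : (0:ℝ) < β := hβ0
      have hn0' : (0:ℝ) < (n:ℝ) := hn0
      calc β * (((m:ℝ)*Δ) ^ β / β + Δ * ((m:ℝ)*Δ) ^ (β - 1) + r ^ (β-1) * Δ)
          = ((m:ℝ)*Δ) ^ β + β * (Δ * ((m:ℝ)*Δ) ^ (β - 1)) + β * (r ^ (β-1) * Δ) := by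
            field_simp [hβne]
        _ ≤ r ^ β + β * (r ^ β / n) + β * (r ^ β / n) := by
            have e6 : β * (r ^ (β-1) * Δ) = β * (r ^ β / (n:ℝ)) := by rw [e3]
            have e7 := mul_le_mul_of_nonneg_left e5 hβ0.le
            linarith
        _ = r ^ β + 2 * β * r ^ β / n := by ring
    have hεbound : 2 * β * r ^ β / (n:ℝ) ≤ (ε:ℝ) := by
      have h3 : 2 * β * r ^ β < (m:ℝ) * ε := by
        rw [div_lt_iff₀ hεpos] at hm
        linarith [hm]
      have h4 : (m:ℝ) * ε ≤ (n:ℝ) * ε := by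
        have : (m:ℝ) ≤ (n:ℝ) := by exact_mod_cast Nat.le_succ m
        nlinarith
      rw [div_le_iff₀ hn0]
      calc 2 * β * r ^ β ≤ (m:ℝ) * ε := h3.le
        _ ≤ (n:ℝ) * ε := h4
        _ = (ε:ℝ) * n := by ring
    calc ENNReal.ofReal β * ω (Set.Ioi 0)
        ≤ ENNReal.ofReal β *
          (ENNReal.ofReal (((m:ℝ)*Δ) ^ β / β + Δ * ((m:ℝ)*Δ) ^ (β - 1))
            + ENNReal.ofReal (r ^ (β-1) * Δ)) := by
          rw [hsplit]
          exact mul_le_mul_right (add_le_add h1 h2') _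
      _ = ENNReal.ofReal (β * (((m:ℝ)*Δ) ^ β / β + Δ * ((m:ℝ)*Δ) ^ (β - 1) + r ^ (β-1) * Δ)) := by
          rw [← ENNReal.ofReal_add (by positivity) (by positivity),
            ← ENNReal.ofReal_mul hβ0.le]
      _ ≤ ENNReal.ofReal (r ^ β + 2 * β * r ^ β / n) := ENNReal.ofReal_le_ofReal hrealfin
      _ = ENNReal.ofReal (r ^ β) + ENNReal.ofReal (2 * β * r ^ β / n) := by
          rw [← ENNReal.ofReal_add (by positivity) (by positivity)]
      _ ≤ R ^ β + (ε : ℝ≥0∞) := by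
          refine add_le_add (le_of_eq ?_) ?_
          · rw [hRr, ENNReal.ofReal_rpow_of_pos hr0]
          · rw [← ENNReal.ofReal_coe_nnreal]
            exact ENNReal.ofReal_le_ofReal hεbound



theorem rpow_integral_le_integral_rpow_of_antitone (F : ℝ → ℝ) (hF0 : ∀ t, 0 ≤ F t)
    (hFmono : ∀ s t : ℝ, 0 ≤ s → s ≤ t → F t ≤ F s)
    (α : ℝ) (hα0 : 0 < α) (hα1 : α ≤ 1) :
    (ENNReal.ofReal (1 / α) *
        ∫⁻ t in Set.Ioi (0 : ℝ), ENNReal.ofReal (F t * t ^ (1 / α - 1))) ^ α ≤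
      ∫⁻ t in Set.Ioi (0 : ℝ), ENNReal.ofReal (F t ^ α) := by
  set G : ℝ → ℝ := fun t => F (max t 0) with hGdef
  have hGanti : Antitone G := fun s t hst =>
    hFmono _ _ (le_max_right s 0) (max_le_max hst le_rfl)
  have hGm : Measurable G := hGanti.measurable
  have hG0 : ∀ t, 0 ≤ G t := fun t => hF0 _
  have hGF : ∀ t ∈ Set.Ioi (0:ℝ), G t = F t := fun t ht => by
    rw [hGdef]; simp only; rw [max_eq_left (le_of_lt ht)]
  have hc1 : ∫⁻ t in Set.Ioi (0:ℝ), ENNReal.ofReal (F t * t ^ (1/α - 1))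
      = ∫⁻ t in Set.Ioi (0:ℝ), ENNReal.ofReal (G t * t ^ (1/α - 1)) :=
    setLIntegral_congr_fun measurableSet_Ioi (fun t ht => by simp only [hGF t ht])
  have hc2 : ∫⁻ t in Set.Ioi (0:ℝ), ENNReal.ofReal (F t ^ α)
      = ∫⁻ t in Set.Ioi (0:ℝ), ENNReal.ofReal (G t ^ α) :=
    setLIntegral_congr_fun measurableSet_Ioi (fun t ht => by simp only [hGF t ht])
  rw [hc1, hc2]
  rcases eq_or_lt_of_le hα1 with rfl | hα
  · norm_num
  have hβ : 1 < 1/α := one_lt_one_div hα0 hα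
  have hβ1 : (0:ℝ) ≤ 1/α - 1 := by linarith
  set x : ℝ → ℝ≥0∞ := fun t => ENNReal.ofReal (G t ^ α) with hxdef
  have hx : Measurable x := (hGm.pow measurable_const).ennreal_ofReal
  set R : ℝ≥0∞ := ∫⁻ t in Set.Ioi (0:ℝ), x t with hRdef
  rcases eq_or_ne R ⊤ with hR | hR
  · rw [hR]; exact le_top
  set Φ : ℝ → ℝ≥0∞ := fun t => ∫⁻ s in Set.Ioc (0:ℝ) t, x s with hΦdef
  have hxmono : ∀ s t : ℝ, 0 < s → s ≤ t → x t ≤ x s := fun s t hs hst =>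
    ENNReal.ofReal_le_ofReal (Real.rpow_le_rpow (hG0 t) (hGanti hst) hα0.le)
  have hΦlb : ∀ t : ℝ, 0 < t → x t * ENNReal.ofReal t ≤ Φ t := by
    intro t ht
    calc x t * ENNReal.ofReal t = x t * volume (Set.Ioc (0:ℝ) t) := by
          rw [Real.volume_Ioc, sub_zero]
      _ = ∫⁻ _ in Set.Ioc (0:ℝ) t, x t := (setLIntegral_const _ _).symm
      _ ≤ ∫⁻ s in Set.Ioc (0:ℝ) t, x s :=
          setLIntegral_mono hx (fun s hs => hxmono s t hs.1 hs.2)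
  have hpt : ∀ t ∈ Set.Ioi (0:ℝ),
      ENNReal.ofReal (G t * t ^ (1/α - 1)) ≤ Φ t ^ (1/α - 1) * x t := by
    intro t ht
    have ht0 : (0:ℝ) < t := ht
    have e1 : ENNReal.ofReal (G t) = x t ^ (1/α) := by
      rw [hxdef]
      simp only
      rw [ENNReal.ofReal_rpow_of_nonneg (Real.rpow_nonneg (hG0 t) α) (by positivity),
        ← Real.rpow_mul (hG0 t), mul_one_div, div_self hα0.ne', Real.rpow_one]
    calc ENNReal.ofReal (G t * t ^ (1/α - 1))
        = ENNReal.ofReal (G t) * ENNReal.ofReal (t ^ (1/α - 1)) :=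
          ENNReal.ofReal_mul (hG0 t)
      _ = x t ^ (1/α) * ENNReal.ofReal t ^ (1/α - 1) := by
          rw [e1, ENNReal.ofReal_rpow_of_pos ht0]
      _ = x t * (x t ^ (1/α - 1) * ENNReal.ofReal t ^ (1/α - 1)) := by
          have e2 : x t ^ (1/α) = x t * x t ^ (1/α - 1) := by
            calc x t ^ (1/α) = x t ^ (1 + (1/α - 1)) := by norm_num
              _ = x t ^ (1:ℝ) * x t ^ (1/α - 1) :=
                  ENNReal.rpow_add_of_nonneg _ _ zero_le_one hβ1
              _ = x t * x t ^ (1/α - 1) := by rw [ENNReal.rpow_one]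
          rw [e2, mul_assoc]
      _ = x t * (x t * ENNReal.ofReal t) ^ (1/α - 1) := by
          rw [ENNReal.mul_rpow_of_nonneg _ _ hβ1]
      _ ≤ x t * Φ t ^ (1/α - 1) :=
          mul_le_mul_right (ENNReal.rpow_le_rpow (hΦlb t ht0) hβ1) _
      _ = Φ t ^ (1/α - 1) * x t := mul_comm _ _
  have hΦmono : Monotone Φ := fun a b hab =>
    lintegral_mono_set (Set.Ioc_subset_Ioc_right hab)
  have hΦmeas : Measurable Φ := hΦmono.measurable
  have hL : ∫⁻ t in Set.Ioi (0:ℝ), ENNReal.ofReal (G t * t ^ (1/α - 1))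
      ≤ ∫⁻ t in Set.Ioi (0:ℝ), Φ t ^ (1/α - 1) * x t :=
    setLIntegral_mono ((hΦmeas.pow measurable_const).mul hx) hpt
  have hxC : ∀ t ∈ Set.Ioi (0:ℝ), x t ≤ ENNReal.ofReal (G 0 ^ α) := fun t ht =>
    ENNReal.ofReal_le_ofReal (Real.rpow_le_rpow (hG0 t) (hGanti (le_of_lt ht)) hα0.le)
  have hcore := aux_core x hx (1/α) hβ (ENNReal.ofReal (G 0 ^ α)) ENNReal.ofReal_ne_top
    hxC hR
  calc (ENNReal.ofReal (1/α) * ∫⁻ t in Set.Ioi (0:ℝ), ENNReal.ofReal (G t * t ^ (1/α - 1))) ^ α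
      ≤ (ENNReal.ofReal (1/α) * ∫⁻ t in Set.Ioi (0:ℝ), Φ t ^ (1/α - 1) * x t) ^ α :=
        ENNReal.rpow_le_rpow (mul_le_mul_right hL _) hα0.le
    _ ≤ (R ^ (1/α)) ^ α := ENNReal.rpow_le_rpow hcore hα0.le
    _ = R := by
        rw [← ENNReal.rpow_mul, one_div_mul_cancel hα0.ne', ENNReal.rpow_one]
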